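/- Let H be a real Hilbert space, μ ∈ ℝ, and let A be a bounded self-adjoint linear operator on H satisfying ⟨A v, v⟩ ≤ μ ‖v‖² for all v ∈ H. Let k ≥ 1 and v₁, …, v_k ∈ H. For each j ∈ {1, …, k}, let G_j^A be the k × k real matrix whose (a, b) entry equals ⟨A v_j, v_b⟩ if a = j, and ⟨v_a, v_b⟩ if a ≠ j. Then Σ_{j=1}^k det G_j^A ≤ k μ · det [⟨v_a, v_b⟩]_{a,b=1,…,k}. (This is the min-max bound on k-dimensional volume growth rates: the quadratic form of Â^{(k)} on the k-blade v₁ ∧ ⋯ ∧ v_k is at most k μ times the squared blade norm.) -/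

import Mathlib

open scoped RealInnerProductSpace

open scoped Matrix

open scoped MatrixOrder in
private lemma aux_exists_sqrt {n : Type*} [Fintype n] [DecidableEq n]
    {P : Matrix n n ℝ} (hP : P.PosSemidef) : ∃ S : Matrix n n ℝ, S.IsHermitian ∧ S * S = P := by
  obtain ⟨X, hX, -, hXX⟩ := CFC.exists_sqrt_of_isSelfAdjoint_of_quasispectrumRestricts
    hP.isHermitian (QuasispectrumRestricts.nnreal_of_nonneg hP.nonneg)
  exact ⟨X, hX, by simpa using hXX⟩

open Matrix in
private lemma aux_trace_mul_self_transpose_nonneg {n : Type*} [Fintype n]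
    (M : Matrix n n ℝ) : 0 ≤ (M * Mᵀ).trace := by
  rw [Matrix.trace]
  refine Finset.sum_nonneg fun i _ => ?_
  rw [Matrix.diag_apply, Matrix.mul_apply]
  exact Finset.sum_nonneg fun j _ => mul_self_nonneg _

open Matrix in
private lemma aux_trace_mul_nonneg {n : Type*} [Fintype n] [DecidableEq n]
    {P Q : Matrix n n ℝ} (hP : P.PosSemidef) (hQ : Q.PosSemidef) :
    0 ≤ (P * Q).trace := by
  obtain ⟨S, hS, rfl⟩ : ∃ S : Matrix n n ℝ, S.IsHermitian ∧ S * S = P :=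
    aux_exists_sqrt hP
  obtain ⟨T, hT, rfl⟩ : ∃ T : Matrix n n ℝ, T.IsHermitian ∧ T * T = Q :=
    aux_exists_sqrt hQ
  have hSt : Sᵀ = S := (Matrix.conjTranspose_eq_transpose_of_trivial S).symm.trans hS.eq
  have hTt : Tᵀ = T := (Matrix.conjTranspose_eq_transpose_of_trivial T).symm.trans hT.eq
  have h1 : S * S * (T * T) = S * ((S * T) * T) := by simp [mul_assoc]
  have h2 : ((S * T) * T) * S = (S * T) * ((S * T)ᵀ) := by
    rw [Matrix.transpose_mul, hSt, hTt, mul_assoc]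
  rw [h1, Matrix.trace_mul_comm, h2]
  exact aux_trace_mul_self_transpose_nonneg _

open Matrix in
set_option maxHeartbeats 1000000 in
private lemma aux_adjugate_posSemidef {n : Type*} [Fintype n] [DecidableEq n]
    {G : Matrix n n ℝ} (hG : G.PosSemidef) : (Matrix.adjugate G).PosSemidef := by
  obtain ⟨S, hS, rfl⟩ : ∃ S : Matrix n n ℝ, S.IsHermitian ∧ S * S = G :=
    aux_exists_sqrt hG
  rw [Matrix.adjugate_mul_distrib]
  have h : adjugate S = (adjugate S)ᴴ := by rw [Matrix.adjugate_conjTranspose, hS.eq]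
  nth_rewrite 1 [h]
  exact Matrix.posSemidef_conjTranspose_mul_self (Matrix.adjugate S)

/-- Min-max bound on `k`-dimensional volume growth rates: if `⟪A v, v⟫ ≤ μ ‖v‖²` for a
bounded self-adjoint operator `A`, then the quadratic form of `Â⁽ᵏ⁾` on the `k`-blade
`v₁ ∧ ⋯ ∧ v_k`, namely `Σ_j det G_j^A`, is at most `k μ` times the Gram determinant. -/
theorem wedge_derivation_minmax_bound
    {H : Type*} [NormedAddCommGroup H] [InnerProductSpace ℝ H] [CompleteSpace H]
    (μ : ℝ) (A : H →L[ℝ] H)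
    (hA_sa : ∀ v w : H, ⟪A v, w⟫ = ⟪v, A w⟫)
    (hA_bound : ∀ v : H, ⟪A v, v⟫ ≤ μ * ‖v‖ ^ 2)
    (k : ℕ) (hk : 1 ≤ k) (v : Fin k → H) :
    ∑ j : Fin k, Matrix.det (Matrix.of fun a b : Fin k =>
        if a = j then ⟪A (v j), v b⟫ else ⟪v a, v b⟫)
      ≤ (k : ℝ) * μ * Matrix.det (Matrix.of fun a b : Fin k => ⟪v a, v b⟫) := by
  classical
  set G := Matrix.of fun a b : Fin k => (⟪v a, v b⟫ : ℝ) with hGdef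
  set M := Matrix.of fun a b : Fin k => (⟪A (v a), v b⟫ : ℝ) with hMdef
  set N : Matrix (Fin k) (Fin k) ℝ := μ • G - M with hNdef
  have hGsym : Gᵀ = G := by
    ext a b
    simp only [Matrix.transpose_apply, hGdef, Matrix.of_apply]
    exact real_inner_comm _ _
  have key : ∀ (B : H →L[ℝ] H) (x : Fin k → ℝ),
      x ⬝ᵥ ((Matrix.of fun a b : Fin k => ⟪B (v a), v b⟫) *ᵥ x)
        = ⟪B (∑ a, x a • v a), ∑ b, x b • v b⟫ := by
    intro B x
    simp only [Matrix.mulVec, dotProduct, Matrix.of_apply, map_sum, map_smul,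
      sum_inner, inner_sum, real_inner_smul_left, real_inner_smul_right, Finset.mul_sum]
    rw [Finset.sum_comm]
    refine Finset.sum_congr rfl fun a _ => Finset.sum_congr rfl fun b _ => by ring
  have hG_psd : G.PosSemidef := by
    refine Matrix.PosSemidef.of_dotProduct_mulVec_nonneg ?_ ?_
    · rw [Matrix.IsHermitian, Matrix.conjTranspose_eq_transpose_of_trivial, hGsym]
    · intro x
      have h := key (ContinuousLinearMap.id ℝ H) x
      simp only [ContinuousLinearMap.id_apply] at h
      rw [star_trivial, hGdef, h]
      exact real_inner_self_nonneg
  have hN_psd : N.PosSemidef := by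
    refine Matrix.PosSemidef.of_dotProduct_mulVec_nonneg ?_ ?_
    · ext a b
      simp only [hNdef, Matrix.conjTranspose_apply, Matrix.sub_apply, Matrix.smul_apply,
        hGdef, hMdef, Matrix.of_apply, star_trivial, smul_eq_mul]
      rw [real_inner_comm (v b) (v a), hA_sa (v b) (v a), real_inner_comm (v b) (A (v a))]
    · intro x
      have hg := key (ContinuousLinearMap.id ℝ H) x
      simp only [ContinuousLinearMap.id_apply] at hg
      have hm := key A x
      set u : H := ∑ a, x a • v a with hu
      have hb := hA_bound u
      rw [star_trivial, hNdef, Matrix.sub_mulVec, Matrix.smul_mulVec,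
        dotProduct_sub, dotProduct_smul, hGdef, hMdef, hg, hm, smul_eq_mul]
      have hnorm : ⟪u, u⟫ = ‖u‖ ^ 2 := real_inner_self_eq_norm_sq u
      rw [hnorm]
      linarith
  have hrow : ∀ j : Fin k, (Matrix.of fun a b : Fin k =>
      if a = j then ⟪A (v j), v b⟫ else ⟪v a, v b⟫) = G.updateRow j (M j) := by
    intro j
    ext a b
    rw [Matrix.updateRow_apply]
    by_cases h : a = j <;> simp [h, hMdef, hGdef]
  have hdet : ∀ j, (G.updateRow j (M j)).det = ∑ i, Matrix.adjugate G j i * M j i := by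
    intro j
    rw [← Matrix.cramer_transpose_apply, hGsym, Matrix.cramer_eq_adjugate_mulVec]
    simp [Matrix.mulVec, dotProduct]
  have hLHS : (∑ j, (G.updateRow j (M j)).det) = (Matrix.adjugate G * Mᵀ).trace := by
    rw [Matrix.trace]
    refine Finset.sum_congr rfl fun j _ => ?_
    rw [hdet j, Matrix.diag_apply, Matrix.mul_apply]
    simp [Matrix.transpose_apply]
  have htrG : (Matrix.adjugate G * Gᵀ).trace = (k : ℝ) * G.det := by
    rw [hGsym, Matrix.adjugate_mul, Matrix.trace_smul, Matrix.trace_one]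
    simp [mul_comm]
  have h0 : 0 ≤ (Matrix.adjugate G * Nᵀ).trace :=
    aux_trace_mul_nonneg (aux_adjugate_posSemidef hG_psd) hN_psd.transpose
  have hexp : (Matrix.adjugate G * Nᵀ).trace
      = μ * ((Matrix.adjugate G * Gᵀ).trace) - (Matrix.adjugate G * Mᵀ).trace := by
    rw [hNdef, Matrix.transpose_sub, Matrix.transpose_smul, Matrix.mul_sub, Matrix.mul_smul,
      Matrix.trace_sub, Matrix.trace_smul, smul_eq_mul]
  have hsum : ∑ j : Fin k, Matrix.det (Matrix.of fun a b : Fin k =>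
        if a = j then ⟪A (v j), v b⟫ else ⟪v a, v b⟫) = (Matrix.adjugate G * Mᵀ).trace := by
    rw [← hLHS]
    exact Finset.sum_congr rfl fun j _ => by rw [hrow j]
  rw [hsum]
  have hr : μ * ((k : ℝ) * G.det) = (k : ℝ) * μ * G.det := by ring
  have hmtr : μ * (Matrix.adjugate G * Gᵀ).trace = μ * ((k : ℝ) * G.det) := by rw [htrG]
  linarith
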